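/- For every n ≥ 0, the one-term distributive chain complex (C_k(A_n), ∂^▷_k) of the n-th Laver table A_n is acyclic: the map ∂^▷_1 : C_1(A_n) → ℤ is surjective and, for every k ≥ 1, the kernel of ∂^▷_k equals the image of ∂^▷_{k+1}; hence all homology groups of this complex are trivial. -/

import Mathlib

def IsLaverOp (N : ℕ) (op : ℕ → ℕ → ℕ) : Prop :=
  (∀ p q, 1 ≤ p → p ≤ N → 1 ≤ q → q ≤ N → 1 ≤ op p q ∧ op p q ≤ N) ∧
  (∀ p, 1 ≤ p → p < N → op p 1 = p + 1) ∧
  op N 1 = 1 ∧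
  (∀ p q, 1 ≤ p → p ≤ N → 1 ≤ q → q ≤ N → op p (op q 1) = op (op p q) (op p 1))

/-- The underlying set `{1, …, 2^n}` of the `n`-th Laver table. -/
abbrev LaverSet (n : ℕ) := {p : ℕ // 1 ≤ p ∧ p ≤ 2 ^ n}

/-- The `i`-th face map (0-indexed) of the one-term distributive complex: omit the
`i`-th entry and act by `x_i` on all later entries. -/
def laverFace {S : Type*} (act : S → S → S) {k : ℕ} (i : Fin (k + 1))
    (x : Fin (k + 1) → S) : Fin k → S :=
  fun j => if (j : ℕ) < (i : ℕ) then x j.castSucc else act (x i) (x j.succ)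

/-- The one-term boundary operator `∂^▷ = Σ_{i} (−1)^i d^▷_{i}` on the free ℤ-module
on `S^{k+1}` (with the free ℤ-module on `S^0 = Fin 0 → S` serving as `C_0 ≅ ℤ`). -/
noncomputable def bdry {S : Type*} (act : S → S → S) (k : ℕ) :
    ((Fin (k + 1) → S) →₀ ℤ) →ₗ[ℤ] ((Fin k → S) →₀ ℤ) :=
  ∑ i : Fin (k + 1), ((-1 : ℤ) ^ (i : ℕ)) • Finsupp.lmapDomain ℤ ℤ (laverFace act i)


def tabAux (N : ℕ) : ℕ → ℕ → ℕ → ℕ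
  | 0, _, q => q
  | _+1, p, 0 => if N ≤ p then 0 else p + 1
  | _+1, p, 1 => if N ≤ p then 1 else p + 1
  | d+1, p, q+2 => if N ≤ p then q+2 else tabAux N d (tabAux N (d+1) p (q+1)) (p+1)
termination_by d _ q => (d, q)

def tab (N p q : ℕ) : ℕ := tabAux N (N - p) p q

-- row N (any fuel) is identity
lemma tabAux_top {N d p q : ℕ} (h : N ≤ p) : tabAux N d p q = q := by
  match d, q with
  | 0, q => simp [tabAux]
  | d+1, 0 => simp [tabAux, h]
  | d+1, 1 => simp [tabAux, h]
  | d+1, q+2 => simp [tabAux, h]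

lemma tab_top {N p q : ℕ} (h : N ≤ p) : tab N p q = q := tabAux_top h

lemma tabAux_one {N d p : ℕ} (hd : 0 < d) (h : p < N) : tabAux N d p 1 = p + 1 := by
  match d with
  | d+1 => simp [tabAux, Nat.not_le.mpr h]

lemma tab_one {N p : ℕ} (h : p < N) : tab N p 1 = p + 1 :=
  tabAux_one (by omega) h

lemma tabAux_main {N : ℕ} (d : ℕ) : ∀ p, 1 ≤ p → p < N → N ≤ d + p → ∀ q, 1 ≤ q →
    p < tabAux N d p q ∧ tabAux N d p q ≤ N ∧ tabAux N d p q = tabAux N (N - p) p q := by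
  induction d using Nat.strong_induction_on with
  | _ d IH =>
  intro p hp hpN hd q
  induction q using Nat.strong_induction_on with
  | _ q IHq =>
  intro hq
  obtain ⟨d, rfl⟩ : ∃ d', d = d' + 1 := ⟨d - 1, by omega⟩
  match q, hq with
  | 1, _ =>
    have h1 : tabAux N (d+1) p 1 = p + 1 := tabAux_one (by omega) hpN
    have h2 : tabAux N (N-p) p 1 = p + 1 := tabAux_one (by omega) hpN
    refine ⟨by omega, by omega, by omega⟩
  | q+2, _ =>
    obtain ⟨hu1, hu2, hu3⟩ := IHq (q+1) (by omega) (by omega)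
    set u := tabAux N (d+1) p (q+1) with hu
    have hstep : tabAux N (d+1) p (q+2) = tabAux N d u (p+1) := by
      rw [tabAux]; simp [Nat.not_le.mpr hpN, hu]
    have hNp : N - p = (N - p - 1) + 1 := by omega
    have hstep2 : tabAux N (N-p) p (q+2) = tabAux N (N-p-1) u (p+1) := by
      rw [hNp, tabAux]; simp only [Nat.not_le.mpr hpN, if_false]
      rw [← hNp, ← hu3]
    rcases eq_or_lt_of_le hu2 with hEq | hlt
    · rw [hstep, hstep2, ← hEq, tabAux_top (le_refl u), tabAux_top (le_refl u), hEq]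
      exact ⟨by omega, by omega, rfl⟩
    · obtain ⟨hv1, hv2, hv3⟩ := IH d (by omega) u (by omega) hlt (by omega) (p+1) (by omega)
      obtain ⟨hw1, hw2, hw3⟩ := IH (N-p-1) (by omega) u (by omega) hlt (by omega) (p+1) (by omega)
      rw [hstep, hstep2]
      exact ⟨by omega, by omega, by rw [hv3, hw3]⟩

lemma tab_gt {N p q : ℕ} (hp : 1 ≤ p) (hpN : p < N) (hq : 1 ≤ q) : p < tab N p q :=
  (tabAux_main (N-p) p hp hpN (by omega) q hq).1

lemma tab_le {N p q : ℕ} (hp : 1 ≤ p) (hpN : p < N) (hq : 1 ≤ q) : tab N p q ≤ N :=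
  (tabAux_main (N-p) p hp hpN (by omega) q hq).2.1

lemma tab_succ {N p q : ℕ} (hp : 1 ≤ p) (hpN : p < N) (hq : 1 ≤ q) :
    tab N p (q+1) = tab N (tab N p q) (p+1) := by
  obtain ⟨q', rfl⟩ : ∃ q', q = q' + 1 := ⟨q - 1, by omega⟩
  have hNp : N - p = (N - p - 1) + 1 := by omega
  have hstep : tab N p (q'+2) = tabAux N (N-p-1) (tab N p (q'+1)) (p+1) := by
    show tabAux N (N-p) p (q'+2) = _
    rw [hNp, tabAux]; simp only [Nat.not_le.mpr hpN, if_false]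
    rw [← hNp]; rfl
  set u := tab N p (q'+1) with hu
  have hu1 : p < u := tab_gt hp hpN (by omega)
  have hu2 : u ≤ N := tab_le hp hpN (by omega)
  rcases eq_or_lt_of_le hu2 with hEq | hlt
  · rw [hstep, ← hEq, tabAux_top (le_refl u), tab_top (le_refl u)]
  · rw [hstep]
    exact (tabAux_main (N-p-1) u (by omega) hlt (by omega) (p+1) (by omega)).2.2


namespace LaverWork

variable {N : ℕ} {op : ℕ → ℕ → ℕ}

/-- Row `N` of any Laver op is the identity. -/
lemma op_top (h : IsLaverOp N op) (hN : 1 ≤ N) : ∀ q, 1 ≤ q → q ≤ N → op N q = q := by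
  obtain ⟨h1, h2, h3, h4⟩ := h
  intro q hq hqN
  induction q with
  | zero => omega
  | succ q IHq =>
    rcases Nat.eq_or_lt_of_le hq with hq1 | hq1
    · have hq0 : q = 0 := by omega
      subst hq0; simpa using h3
    · have hq' : 1 ≤ q := by omega
      have hqN' : q < N := by omega
      have : op N (q+1) = op N (op q 1) := by rw [h2 q hq' hqN']
      rw [this, h4 N q hN (le_refl N) hq' (by omega), IHq hq' (by omega), h3,
        h2 q hq' hqN']

/-- Values in row `p < N` are `> p` (and `≤ N`). -/
lemma op_gt (h : IsLaverOp N op) :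
    ∀ dp p q, N - p = dp → 1 ≤ p → p < N → 1 ≤ q → q ≤ N → p < op p q := by
  obtain ⟨h1, h2, h3, h4⟩ := h
  intro dp
  induction dp using Nat.strong_induction_on with
  | _ dp IH =>
  intro p q hdp hp hpN hq hqN
  induction q using Nat.strong_induction_on with
  | _ q IHq =>
  rcases Nat.eq_or_lt_of_le hq with hq1 | hq1
  · rw [← hq1, h2 p hp hpN]; omega
  · obtain ⟨q', rfl⟩ : ∃ q', q = q' + 1 := ⟨q - 1, by omega⟩
    have hq' : 1 ≤ q' := by omega
    have hq'N : q' < N := by omega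
    have hrec : op p (q'+1) = op (op p q') (op p 1) := by
      rw [← h4 p q' hp (by omega) hq' (by omega), h2 q' hq' hq'N]
    have hu1 : p < op p q' := IHq q' (by omega) hq' (by omega)
    have hu2 : op p q' ≤ N := (h1 p q' hp (by omega) hq' (by omega)).2
    rw [hrec, h2 p hp hpN]
    rcases Nat.eq_or_lt_of_le hu2 with hEq | hlt
    · rw [hEq, op_top ⟨h1, h2, h3, h4⟩ (by omega) (p+1) (by omega) (by omega)]; omega
    · have := IH (N - op p q') (by omega) (op p q') (p+1) rfl (by omega) hlt (by omega) (by omega)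
      omega

lemma op_le (h : IsLaverOp N op) {p q : ℕ} (hp : 1 ≤ p) (hpN : p ≤ N) (hq : 1 ≤ q)
    (hqN : q ≤ N) : op p q ≤ N := (h.1 p q hp hpN hq hqN).2

/-- Uniqueness: any two Laver ops at the same `N` agree. -/
lemma op_unique {op' : ℕ → ℕ → ℕ} (h : IsLaverOp N op) (h' : IsLaverOp N op') :
    ∀ dp p q, N - p = dp → 1 ≤ p → p ≤ N → 1 ≤ q → q ≤ N → op p q = op' p q := by
  intro dp
  induction dp using Nat.strong_induction_on with
  | _ dp IH =>
  intro p q hdp hp hpN hq hqN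
  rcases Nat.eq_or_lt_of_le hpN with hpe | hplt
  · rw [hpe, op_top h (by omega) q hq hqN, op_top h' (by omega) q hq hqN]
  induction q using Nat.strong_induction_on with
  | _ q IHq =>
  rcases Nat.eq_or_lt_of_le hq with hq1 | hq1
  · rw [← hq1, h.2.1 p hp hplt, h'.2.1 p hp hplt]
  · obtain ⟨q', rfl⟩ : ∃ q', q = q' + 1 := ⟨q - 1, by omega⟩
    have hq' : 1 ≤ q' := by omega
    have hq'N : q' < N := by omega
    have hrec : op p (q'+1) = op (op p q') (op p 1) := by
      rw [← h.2.2.2 p q' hp (by omega) hq' (by omega), h.2.1 q' hq' hq'N]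
    have hrec' : op' p (q'+1) = op' (op' p q') (op' p 1) := by
      rw [← h'.2.2.2 p q' hp (by omega) hq' (by omega), h'.2.1 q' hq' hq'N]
    have hagree : op p q' = op' p q' := IHq q' (by omega) hq' (by omega)
    have hu1 : p < op p q' := op_gt h (N - p) p q' rfl hp hplt hq' (by omega)
    have hu2 : op p q' ≤ N := op_le h hp hpN hq' (by omega)
    rw [hrec, hrec', ← hagree, h.2.1 p hp hplt, h'.2.1 p hp hplt]
    exact IH (N - op p q') (by omega) (op p q') (p+1) rfl (by omega) hu2 (by omega) (by omega)

end LaverWork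

namespace LaverWork

lemma tab_period {N p c : ℕ} (hp : 1 ≤ p) (hpN : p < N) (hc : 1 ≤ c)
    (hhit : tab N p c = N) : ∀ s, 1 ≤ s → tab N p (c + s) = tab N p s := by
  intro s hs
  induction s with
  | zero => omega
  | succ s IHs =>
    rcases Nat.eq_or_lt_of_le hs with hs1 | hs1
    · rw [← hs1]
      rw [show c + 1 = c + 1 from rfl, tab_succ hp hpN hc, hhit,
        tab_top (le_refl N), tab_one hpN]
    · have hs' : 1 ≤ s := by omega
      rw [show c + (s+1) = (c+s) + 1 from by omega, tab_succ hp hpN (by omega),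
        IHs hs', ← tab_succ hp hpN hs']

lemma tab_mult {N p c : ℕ} (hp : 1 ≤ p) (hpN : p < N) (hc : 1 ≤ c)
    (hhit : tab N p c = N) : ∀ k, 1 ≤ k → tab N p (k * c) = N := by
  intro k hk
  induction k with
  | zero => omega
  | succ k IHk =>
    rcases Nat.eq_or_lt_of_le hk with hk1 | hk1
    · rw [← hk1, one_mul]; exact hhit
    · have hk' : 1 ≤ k := by omega
      rw [show (k+1) * c = k * c + c from by ring, tab_period hp hpN (by simpa using Nat.mul_le_mul hk' hc) (IHk hk') c hc]
      exact hhit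

lemma tab_hit_dvd {N p π : ℕ} (hp : 1 ≤ p) (hpN : p < N) (hπ : 1 ≤ π)
    (hhit : tab N p π = N) (hmin : ∀ s, 1 ≤ s → s < π → tab N p s ≠ N) :
    ∀ q, 1 ≤ q → tab N p q = N → π ∣ q := by
  intro q
  induction q using Nat.strong_induction_on with
  | _ q IHq =>
  intro hq hqhit
  rcases lt_trichotomy q π with hlt | hEq | hgt
  · exact absurd hqhit (hmin q hq hlt)
  · rw [hEq]
  · have h1 : tab N p (π + (q - π)) = tab N p (q - π) := tab_period hp hpN hπ hhit _ (by omega)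
    rw [show π + (q - π) = q from by omega] at h1
    have h2 := IHq (q - π) (by omega) (by omega) (by rw [← h1, hqhit])
    have h3 : q = (q - π) + π := by omega
    rw [h3]; exact Nat.dvd_add h2 dvd_rfl

end LaverWork

namespace LaverWork

/-- `x'` is the reduction of `x ∈ [1,2M]` to `[1,M]`. -/
def Rel (M x x' : ℕ) : Prop := 1 ≤ x' ∧ x' ≤ M ∧ (x = x' ∨ x = x' + M)

section Doubling

variable {M : ℕ}

lemma rel_succ (hM : 1 ≤ M) (hL : IsLaverOp M (tab M)) {p p' : ℕ} (hp2 : p < 2*M) (hrel : Rel M p p') :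
    Rel M (p+1) (tab M p' 1) := by
  obtain ⟨h1', h2', h3'⟩ := hrel
  rcases h3' with rfl | rfl
  · rcases Nat.eq_or_lt_of_le h2' with hpe | hplt
    · rw [hpe, hL.2.2.1]
      exact ⟨by omega, by omega, Or.inr (by omega)⟩
    · rw [hL.2.1 p h1' hplt]
      exact ⟨by omega, by omega, Or.inl rfl⟩
  · have hplt : p' < M := by omega
    rw [hL.2.1 p' h1' hplt]
    exact ⟨by omega, by omega, Or.inr (by omega)⟩

lemma rel_red_succ (hM : 1 ≤ M) (hL : IsLaverOp M (tab M)) {q0 q' : ℕ} (hq0 : 1 ≤ q0) (hrel : Rel M (q0+1) q') :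
    ∃ qr, Rel M q0 qr ∧ tab M qr 1 = q' := by
  obtain ⟨h1', h2', h3'⟩ := hrel
  rcases h3' with heq | heq
  · refine ⟨q0, ⟨by omega, by omega, Or.inl rfl⟩, ?_⟩
    rw [hL.2.1 q0 hq0 (by omega)]; omega
  · rcases Nat.eq_or_lt_of_le h1' with hq1 | hq1
    · refine ⟨M, ⟨hM, le_refl M, Or.inl (by omega)⟩, ?_⟩
      rw [hL.2.2.1]; omega
    · refine ⟨q' - 1, ⟨by omega, by omega, Or.inr (by omega)⟩, ?_⟩
      rw [hL.2.1 (q'-1) (by omega) (by omega)]; omega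

lemma hom (hM : 1 ≤ M) (hL : IsLaverOp M (tab M)) : ∀ dp p, 2*M - p = dp → 1 ≤ p → p ≤ 2*M → ∀ q, 1 ≤ q → ∀ p' q',
    Rel M p p' → Rel M q q' → Rel M (tab (2*M) p q) (tab M p' q') := by
  intro dp
  induction dp using Nat.strong_induction_on with
  | _ dp IH =>
  intro p hdp hp hp2M q
  induction q using Nat.strong_induction_on with
  | _ q IHq =>
  intro hq p' q' hrp hrq
  rcases Nat.eq_or_lt_of_le hp2M with hpe | hplt
  · have hp'M : p' = M := by
      obtain ⟨a, b, c⟩ := hrp; omega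
    rw [hpe, tab_top (le_refl (2*M)), hp'M,
      op_top hL hM q' hrq.1 hrq.2.1]
    exact hrq
  · rcases Nat.eq_or_lt_of_le hq with hq1 | hq1
    · have hq'1 : q' = 1 := by obtain ⟨a, b, c⟩ := hrq; omega
      rw [← hq1, hq'1, tab_one hplt]
      exact rel_succ hM hL hplt hrp
    · obtain ⟨q0, rfl⟩ : ∃ q0, q = q0 + 1 := ⟨q - 1, by omega⟩
      have hq0 : 1 ≤ q0 := by omega
      obtain ⟨qr, hrel0, hqr1⟩ := rel_red_succ hM hL hq0 hrq
      have hstep : tab (2*M) p (q0+1) = tab (2*M) (tab (2*M) p q0) (p+1) :=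
        tab_succ hp hplt hq0
      set u := tab (2*M) p q0 with hu
      have hu1 : p < u := tab_gt hp hplt hq0
      have hu2 : u ≤ 2*M := tab_le hp hplt hq0
      have hIHq : Rel M u (tab M p' qr) := IHq q0 (by omega) hq0 p' qr hrp hrel0
      have houter : Rel M (tab (2*M) u (p+1)) (tab M (tab M p' qr) (tab M p' 1)) :=
        IH (2*M - u) (by omega) u rfl (by omega) hu2 (p+1) (by omega) _ _ hIHq
          (rel_succ hM hL hplt hrp)
      rw [hstep]
      have hfin : tab M p' q' = tab M (tab M p' qr) (tab M p' 1) := by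
        rw [← hqr1]
        exact hL.2.2.2 p' qr hrp.1 hrp.2.1 hrel0.1 hrel0.2.1
      rw [hfin]
      exact houter

lemma row_high (hM : 1 ≤ M) (hL : IsLaverOp M (tab M)) {p q q' : ℕ} (hp : M < p) (hp2 : p < 2*M) (hq : 1 ≤ q)
    (hrq : Rel M q q') : tab (2*M) p q = M + tab M (p - M) q' := by
  have hrp : Rel M p (p - M) := ⟨by omega, by omega, Or.inr (by omega)⟩
  have h := hom hM hL (2*M - p) p rfl (by omega) (by omega) q hq _ _ hrp hrq
  have hgt : p < tab (2*M) p q := tab_gt (by omega) hp2 hq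
  obtain ⟨a, b, c⟩ := h
  omega

lemma row_mid (hM : 1 ≤ M) (hL : IsLaverOp M (tab M)) (hM2 : M < 2*M) : ∀ q, 1 ≤ q → q ≤ M → tab (2*M) M q = M + q := by
  intro q
  induction q with
  | zero => omega
  | succ q IHq =>
    intro hq hqM
    rcases Nat.eq_or_lt_of_le hq with hq1 | hq1
    · rw [← hq1, tab_one hM2]
    · have hq0 : 1 ≤ q := by omega
      rw [tab_succ hM hM2 hq0, IHq hq0 (by omega),
        row_high hM hL (by omega) (by omega) (by omega)
          (⟨by omega, by omega, Or.inr (by omega)⟩ : Rel M (M+1) 1)]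
      rw [show M + q - M = q from by omega, hL.2.1 q hq0 (by omega)]

end Doubling

end LaverWork

namespace LaverWork

variable {M : ℕ}

lemma star2 (hM : 1 ≤ M) (hL : IsLaverOp M (tab M))
    (hstar : ∀ p, 1 ≤ p → p ≤ M → tab M p M = M) :
    ∀ p, 1 ≤ p → p ≤ 2*M → tab (2*M) p (2*M) = 2*M := by
  intro p hp hp2
  rcases Nat.eq_or_lt_of_le hp2 with hpe | hplt
  · rw [hpe, tab_top (le_refl (2*M))]
  rcases Nat.lt_or_ge M p with hpM | hpM
  · -- high rows
    rw [row_high hM hL hpM hplt (by omega)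
        (⟨hM, le_refl M, Or.inr (by omega)⟩ : Rel M (2*M) M),
      hstar (p - M) (by omega) (by omega)]
    omega
  rcases Nat.eq_or_lt_of_le hpM with hpMe | hpMlt
  · -- p = M
    have hhit : tab (2*M) M M = 2*M := by
      rw [row_mid hM hL (by omega) M hM (le_refl M)]; omega
    have h2 := tab_mult hM (by omega) hM hhit 2 (by omega)
    rw [hpMe]
    exact h2
  · -- p < M : the period argument
    have hex : tab M p M = M := hstar p hp (by omega)
    have hPex : ∃ c, 1 ≤ c ∧ tab M p c = M := ⟨M, hM, hex⟩
    classical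
    set π := Nat.find hPex with hπdef
    obtain ⟨hπ1, hπhit⟩ := Nat.find_spec hPex
    rw [← hπdef] at hπ1 hπhit
    have hπle : π ≤ M := Nat.find_min' hPex ⟨hM, hex⟩
    have hπmin : ∀ s, 1 ≤ s → s < π → tab M p s ≠ M := by
      intro s hs hsπ hcon
      exact Nat.find_min hPex hsπ ⟨hs, hcon⟩
    have hdvd : π ∣ M := tab_hit_dvd hp hpMlt hπ1 hπhit hπmin M hM hex
    obtain ⟨a, ha⟩ := hdvd
    have ha1 : 1 ≤ a := by
      rcases Nat.eq_zero_or_pos a with h0 | h1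
      · rw [h0, Nat.mul_zero] at ha; omega
      · exact h1
    have hrelp : Rel M p p := ⟨hp, by omega, Or.inl rfl⟩
    have hdich : ∀ s, 1 ≤ s → s ≤ M →
        tab (2*M) p s = tab M p s ∨ tab (2*M) p s = tab M p s + M := by
      intro s hs hsM
      have := hom hM hL (2*M - p) p rfl hp (by omega) s hs p s hrelp
        ⟨hs, hsM, Or.inl rfl⟩
      obtain ⟨x, y, z⟩ := this
      exact z
    have hv := hdich π hπ1 hπle
    rw [hπhit] at hv
    rcases hv with hvM | hv2M
    swap
    · -- tab (2M) p π = 2M : period π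
      have hv2M' : tab (2*M) p π = 2*M := by omega
      have hmult := tab_mult hp hplt hπ1 hv2M' (2*a) (by omega)
      rw [show (2*a) * π = 2*M from by rw [ha]; ring] at hmult
      exact hmult
    · -- tab (2M) p π = M : period 2π
      have hprop : ∀ s, 1 ≤ s → s < π → tab (2*M) p s = M + tab M p s →
          tab (2*M) p (s+1) = M + tab M p (s+1) := by
        intro s hs hsπ heq
        have hTs_le : tab M p s ≤ M := op_le hL hp (by omega) hs (by omega)
        have hTs_lt : tab M p s < M :=
          lt_of_le_of_ne hTs_le (hπmin s hs hsπ)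
        have hTs_gt : p < tab M p s := tab_gt hp hpMlt hs
        rw [tab_succ hp hplt hs, heq,
          row_high hM hL (by omega) (by omega) (by omega)
            (⟨by omega, by omega, Or.inl rfl⟩ : Rel M (p+1) (p+1)),
          show M + tab M p s - M = tab M p s from by omega,
          ← tab_succ hp hpMlt hs]
      have hnothigh : ∀ s, 1 ≤ s → s ≤ π → tab (2*M) p s = M + tab M p s → False := by
        intro s hs hsπ heq
        have haux : ∀ j, s + j ≤ π → tab (2*M) p (s+j) = M + tab M p (s+j) := by
          intro j
          induction j with
          | zero => intro _; simpa using heq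
          | succ j IHj =>
            intro hj
            have h1 := IHj (by omega)
            have := hprop (s+j) (by omega) (by omega) h1
            rw [show s + (j+1) = (s+j) + 1 from by omega]
            exact this
        have := haux (π - s) (by omega)
        rw [show s + (π - s) = π from by omega, hπhit] at this
        omega
      have heps : ∀ s, 1 ≤ s → s ≤ π → tab (2*M) p s = tab M p s := by
        intro s hs hsπ
        rcases hdich s hs (by omega) with h | h
        · exact h
        · exact absurd (by omega : tab (2*M) p s = M + tab M p s)
            (fun hh => hnothigh s hs hsπ hh)
      have hblock2 : ∀ s, 1 ≤ s → s ≤ π → tab (2*M) p (π + s) = M + tab M p s := by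
        intro s hs
        induction s with
        | zero => omega
        | succ s IHs =>
          intro hsπ
          rcases Nat.eq_or_lt_of_le hs with hs1 | hs1
          · rw [← hs1, tab_succ hp hplt hπ1, hvM,
              row_mid hM hL (by omega) (p+1) (by omega) (by omega),
              hL.2.1 p hp hpMlt]
          · have hs' : 1 ≤ s := by omega
            have hTs_le : tab M p s ≤ M := op_le hL hp (by omega) hs' (by omega)
            have hTs_lt : tab M p s < M :=
              lt_of_le_of_ne hTs_le (hπmin s hs' (by omega))
            have hTs_gt : p < tab M p s := tab_gt hp hpMlt hs'
            rw [show π + (s+1) = (π + s) + 1 from by omega,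
              tab_succ hp hplt (by omega), IHs hs' (by omega),
              row_high hM hL (by omega) (by omega) (by omega)
                (⟨by omega, by omega, Or.inl rfl⟩ : Rel M (p+1) (p+1)),
              show M + tab M p s - M = tab M p s from by omega,
              ← tab_succ hp hpMlt hs']
      have hhit2 : tab (2*M) p (2*π) = 2*M := by
        have := hblock2 π hπ1 (le_refl π)
        rw [hπhit] at this
        rw [show 2*π = π + π from by ring, this]
        omega
      have : tab (2*M) p (a * (2*π)) = 2*M :=
        tab_mult hp hplt (by omega) hhit2 a ha1
      rw [show a * (2*π) = 2*M from by rw [ha]; ring] at this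
      exact this

end LaverWork

namespace LaverWork

theorem tab_pkg : ∀ n : ℕ, IsLaverOp (2^n) (tab (2^n)) ∧
    (∀ p, 1 ≤ p → p ≤ 2^n → tab (2^n) p (2^n) = 2^n) := by
  intro n
  induction n with
  | zero =>
    constructor
    · refine ⟨?_, ?_, ?_, ?_⟩
      · intro p q hp hpN hq hqN
        rw [show (2:ℕ)^0 = 1 from rfl] at *
        have : p = 1 := by omega
        rw [this, tab_top (le_refl 1)]; omega
      · intro p hp hpN
        rw [show (2:ℕ)^0 = 1 from rfl] at *; omega
      · rw [show (2:ℕ)^0 = 1 from rfl, tab_top (le_refl 1)]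
      · intro p q hp hpN hq hqN
        rw [show (2:ℕ)^0 = 1 from rfl] at *
        have hp1 : p = 1 := by omega
        have hq1 : q = 1 := by omega
        rw [hp1, hq1]
        simp [tab_top (le_refl 1)]
    · intro p hp hpN
      rw [show (2:ℕ)^0 = 1 from rfl] at *
      have : p = 1 := by omega
      rw [this, tab_top (le_refl 1)]
  | succ n IH =>
    obtain ⟨hL, hstarM⟩ := IH
    have hM : 1 ≤ 2^n := Nat.one_le_two_pow
    have hNN : (2:ℕ)^(n+1) = 2 * 2^n := by rw [pow_succ]; ring
    rw [hNN]
    set M := (2:ℕ)^n with hMdef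
    have hstar2 : ∀ p, 1 ≤ p → p ≤ 2*M → tab (2*M) p (2*M) = 2*M :=
      star2 hM hL hstarM
    constructor
    · refine ⟨?_, ?_, ?_, ?_⟩
      · intro p q hp hpN hq hqN
        rcases Nat.eq_or_lt_of_le hpN with hpe | hplt
        · rw [hpe, tab_top (le_refl (2*M))]; omega
        · have := tab_gt hp hplt hq
          have := tab_le hp hplt hq
          omega
      · intro p hp hpN
        exact tab_one hpN
      · exact tab_top (le_refl (2*M))
      · intro p q hp hpN hq hqN
        rcases Nat.eq_or_lt_of_le hqN with hqe | hqlt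
        · -- q = 2M
          rw [hqe, tab_top (le_refl (2*M))]
          rcases Nat.eq_or_lt_of_le hpN with hpe | hplt
          · rw [hpe, tab_top (le_refl (2*M)), tab_top (le_refl (2*M)),
              tab_top (le_refl (2*M))]
          · rw [hstar2 p hp hpN, tab_top (le_refl (2*M))]
        · rw [tab_one hqlt]
          rcases Nat.eq_or_lt_of_le hpN with hpe | hplt
          · rw [hpe, tab_top (le_refl (2*M)), tab_top (le_refl (2*M)),
              tab_top (le_refl (2*M)), tab_one hqlt]
          · rw [tab_one hplt]
            exact tab_succ hp hplt hq
    · exact hstar2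

/-- Full left self-distributivity. -/
theorem op_ld {N : ℕ} {op : ℕ → ℕ → ℕ} (h : IsLaverOp N op) (hN : 1 ≤ N)
    (hstar : ∀ p, 1 ≤ p → p ≤ N → op p N = N) :
    ∀ dp p, N - p = dp → 1 ≤ p → p ≤ N →
    ∀ dq q, N - q = dq → 1 ≤ q → q ≤ N → ∀ r, 1 ≤ r → r ≤ N →
    op p (op q r) = op (op p q) (op p r) := by
  intro dp
  induction dp using Nat.strong_induction_on with
  | _ dp IHp =>
  intro p hdp hp hpN dq
  induction dq using Nat.strong_induction_on with
  | _ dq IHq =>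
  intro q hdq hq hqN r
  induction r using Nat.strong_induction_on with
  | _ r IHr =>
  intro hr hrN
  have hbd : ∀ x y, 1 ≤ x → x ≤ N → 1 ≤ y → y ≤ N → 1 ≤ op x y ∧ op x y ≤ N := h.1
  rcases Nat.eq_or_lt_of_le hpN with hpe | hplt
  · -- p = N
    obtain ⟨w1, w2⟩ := hbd q r hq hqN hr hrN
    rw [hpe, op_top h hN (op q r) w1 w2, op_top h hN q hq hqN, op_top h hN r hr hrN]
  rcases Nat.eq_or_lt_of_le hqN with hqe | hqlt
  · -- q = N
    obtain ⟨w1, w2⟩ := hbd p r hp hpN hr hrN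
    rw [hqe, op_top h hN r hr hrN, hstar p hp hpN, op_top h hN (op p r) w1 w2]
  rcases Nat.eq_or_lt_of_le hr with hr1 | hr1
  · -- r = 1
    rw [← hr1]
    exact h.2.2.2 p q hp hpN hq hqN
  · -- r = r' + 1
    obtain ⟨r', rfl⟩ : ∃ r', r = r' + 1 := ⟨r - 1, by omega⟩
    have hr' : 1 ≤ r' := by omega
    have hr'N : r' < N := by omega
    have ax4 : ∀ x y, 1 ≤ x → x ≤ N → 1 ≤ y → y < N →
        op x (y+1) = op (op x y) (op x 1) := by
      intro x y hx hxN hy hyN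
      rw [← h.2.1 y hy hyN, h.2.2.2 x y hx hxN hy (by omega)]
    -- bounds
    have hqr' : 1 ≤ op q r' ∧ op q r' ≤ N := hbd q r' hq hqN hr' (by omega)
    have hqr'gt : q < op q r' := op_gt h (N - q) q r' rfl hq hqlt hr' (by omega)
    have hq1 : 1 ≤ op q 1 ∧ op q 1 ≤ N := hbd q 1 hq hqN (le_refl 1) hN
    have hpq : 1 ≤ op p q ∧ op p q ≤ N := hbd p q hp hpN hq hqN
    have hpqgt : p < op p q := op_gt h (N - p) p q rfl hp hplt hq hqN
    have hpr' : 1 ≤ op p r' ∧ op p r' ≤ N := hbd p r' hp hpN hr' (by omega)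
    have hp1 : 1 ≤ op p 1 ∧ op p 1 ≤ N := hbd p 1 hp hpN (le_refl 1) hN
    calc op p (op q (r'+1))
        = op p (op (op q r') (op q 1)) := by rw [ax4 q r' hq hqN hr' hr'N]
      _ = op (op p (op q r')) (op p (op q 1)) :=
          IHq (N - op q r') (by omega) (op q r') rfl hqr'.1 hqr'.2 (op q 1)
            hq1.1 hq1.2
      _ = op (op (op p q) (op p r')) (op (op p q) (op p 1)) := by
          rw [IHr r' (by omega) hr' (by omega), h.2.2.2 p q hp hpN hq hqN]
      _ = op (op p q) (op (op p r') (op p 1)) :=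
          (IHp (N - op p q) (by omega) (op p q) rfl hpq.1 hpq.2 (N - op p r')
            (op p r') rfl hpr'.1 hpr'.2 (op p 1) hp1.1 hp1.2).symm
      _ = op (op p q) (op p (r'+1)) := by rw [← ax4 p r' hp hpN hr' hr'N]

end LaverWork



namespace ChainWork

variable {S : Type*} (act : S → S → S)

/-- The contracting homotopy: prepend `e`. -/
noncomputable def hmt (e : S) (k : ℕ) :
    ((Fin k → S) →₀ ℤ) →ₗ[ℤ] ((Fin (k+1) → S) →₀ ℤ) :=
  Finsupp.lmapDomain ℤ ℤ (fun x => Fin.cons e x)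

lemma face_zero_cons (e : S) (he : ∀ y, act e y = y) {k : ℕ} (x : Fin (k+1) → S) :
    laverFace act 0 (Fin.cons e x) = x := by
  funext j
  simp only [laverFace, Fin.val_zero, Nat.not_lt_zero, if_false, Fin.cons_succ]
  rw [Fin.cons_zero]
  exact he (x j)

lemma face_succ_cons (e : S) {k : ℕ} (i : Fin (k+1)) (x : Fin (k+1) → S) :
    laverFace act i.succ (Fin.cons e x) = Fin.cons e (laverFace act i x) := by
  funext j
  rcases Fin.eq_zero_or_eq_succ j with rfl | ⟨j', rfl⟩
  · simp only [laverFace, Fin.val_zero, Fin.val_succ, Fin.cons_zero]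
    refine (if_pos (show 0 < (i:ℕ)+1 by omega)).trans ?_
    rfl
  · simp only [laverFace, Fin.val_succ, Fin.cons_succ]
    by_cases hij : (j' : ℕ) < (i : ℕ)
    · rw [if_pos (by omega), if_pos hij]
      rw [← Fin.succ_castSucc, Fin.cons_succ]
    · rw [if_neg (by omega), if_neg hij]

end ChainWork

namespace ChainWork

lemma bdry_single {k : ℕ} (y : Fin (k+1) → S) (c : ℤ) :
    bdry act k (Finsupp.single y c)
      = ∑ i : Fin (k+1), ((-1:ℤ)^(i:ℕ)) • Finsupp.single (laverFace act i y) c := by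
  simp [bdry, LinearMap.sum_apply, Finsupp.lmapDomain_apply, Finsupp.mapDomain_single]

lemma homotopy (e : S) (he : ∀ y, act e y = y) (k : ℕ) :
    (bdry act (k+1)).comp (hmt e (k+1)) + (hmt e k).comp (bdry act k)
      = LinearMap.id := by
  apply Finsupp.lhom_ext
  intro x c
  rw [LinearMap.add_apply, LinearMap.id_apply, LinearMap.comp_apply, LinearMap.comp_apply]
  rw [show hmt (S := S) e (k+1) (Finsupp.single x c)
      = Finsupp.single (Fin.cons e x) c from by
    simp [hmt, Finsupp.lmapDomain_apply, Finsupp.mapDomain_single]]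
  rw [bdry_single, bdry_single, map_sum]
  simp only [map_smul, hmt, Finsupp.lmapDomain_apply, Finsupp.mapDomain_single]
  rw [Fin.sum_univ_succ, face_zero_cons act e he]
  simp only [Fin.val_zero, pow_zero, one_smul, Fin.val_succ, face_succ_cons act e]
  rw [add_assoc, ← Finset.sum_add_distrib]
  have hz : ∀ i : Fin (k+1), (i ∈ Finset.univ) →
      ((-1:ℤ)^((i:ℕ)+1)) • Finsupp.single (Fin.cons e (laverFace act i x) : Fin (k+1) → S) c
        + ((-1:ℤ)^((i:ℕ))) • Finsupp.single (Fin.cons e (laverFace act i x) : Fin (k+1) → S) c = 0 := by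
    intro i _
    rw [pow_succ, mul_neg_one, neg_smul, neg_add_cancel]
  rw [Finset.sum_eq_zero hz, add_zero]

end ChainWork

namespace ChainWork

variable {S : Type*} (act : S → S → S)

lemma face_face (hLD : ∀ a b c, act a (act b c) = act (act a b) (act a c))
    {k : ℕ} (a b : Fin (k+1)) (hab : (a:ℕ) ≤ (b:ℕ)) (x : Fin (k+2) → S) :
    laverFace act a (laverFace act b.succ x)
      = laverFace act b (laverFace act a.castSucc x) := by
  funext m
  simp only [laverFace, Fin.coe_castSucc, Fin.val_succ]
  rcases Nat.lt_or_ge (m:ℕ) (a:ℕ) with h1 | h1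
  · -- m < a ≤ b
    rw [if_pos h1, if_pos (show (m:ℕ) < (b:ℕ) from lt_of_lt_of_le h1 hab),
      if_pos (show (m:ℕ) < (b:ℕ)+1 from by omega),
      if_pos (show (m:ℕ) < (a:ℕ) from h1)]
  · rcases Nat.lt_or_ge (m:ℕ) (b:ℕ) with h2 | h2
    · -- a ≤ m < b
      rw [if_neg (not_lt.mpr h1), if_pos h2,
        if_pos (show (a:ℕ) < (b:ℕ)+1 from by omega),
        if_pos (show (m:ℕ)+1 < (b:ℕ)+1 from by omega),
        if_neg (show ¬((m:ℕ) < (a:ℕ)) from by omega),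
        Fin.succ_castSucc]
    · -- a ≤ b ≤ m
      rw [if_neg (not_lt.mpr h1), if_neg (not_lt.mpr h2),
        if_pos (show (a:ℕ) < (b:ℕ)+1 from by omega),
        if_neg (show ¬((m:ℕ)+1 < (b:ℕ)+1) from by omega),
        if_neg (show ¬((b:ℕ) < (a:ℕ)) from by omega),
        if_neg (show ¬((m:ℕ)+1 < (a:ℕ)) from by omega)]
      exact hLD _ _ _

end ChainWork

namespace ChainWork

variable {S : Type*} (act : S → S → S)

lemma bdry_bdry (hLD : ∀ a b c, act a (act b c) = act (act a b) (act a c)) (k : ℕ) :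
    (bdry act k).comp (bdry act (k+1)) = 0 := by
  apply Finsupp.lhom_ext
  intro x c
  rw [LinearMap.comp_apply, LinearMap.zero_apply, bdry_single, map_sum]
  simp only [map_smul, bdry_single, Finset.smul_sum, smul_smul]
  rw [← Finset.sum_product']
  set F : Fin (k+2) × Fin (k+1) → ((Fin k → S) →₀ ℤ) := fun p =>
    ((-1:ℤ)^((p.1:ℕ)) * (-1)^((p.2:ℕ))) •
      Finsupp.single (laverFace act p.2 (laverFace act p.1 x)) c with hF
  show ∑ p ∈ Finset.univ ×ˢ Finset.univ, F p = 0
  rw [Finset.univ_product_univ]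
  refine Finset.sum_involution
    (fun p _ => if h : ((p.1:ℕ) ≤ (p.2:ℕ))
      then ((⟨(p.2:ℕ)+1, by have := p.2.isLt; omega⟩ : Fin (k+2)),
            (⟨(p.1:ℕ), lt_of_le_of_lt h p.2.isLt⟩ : Fin (k+1)))
      else ((⟨(p.2:ℕ), by have := p.2.isLt; omega⟩ : Fin (k+2)),
            (⟨(p.1:ℕ)-1, by have := p.1.isLt; omega⟩ : Fin (k+1))))
    ?_ ?_ (fun p _ => Finset.mem_univ _) ?_
  · -- cancellation
    rintro ⟨j, i⟩ -
    dsimp only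
    by_cases h : ((j:ℕ) ≤ (i:ℕ))
    · rw [dif_pos h]
      have hface := face_face act hLD ⟨(j:ℕ), lt_of_le_of_lt h i.isLt⟩ i h x
      have hc1 : (⟨(j:ℕ), lt_of_le_of_lt h i.isLt⟩ : Fin (k+1)).castSucc = j :=
        Fin.ext rfl
      have hc2 : (⟨(i:ℕ)+1, by have := i.isLt; omega⟩ : Fin (k+2)) = i.succ :=
        Fin.ext rfl
      rw [hc1] at hface
      simp only [hF]
      rw [hc2, hface, ← add_smul]
      have hcoef : ((-1:ℤ)^((j:ℕ)) * (-1)^((i:ℕ)) + (-1)^((i:ℕ)+1) * (-1)^((j:ℕ))) = 0 := by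
        rw [pow_succ]; ring
      rw [hcoef, zero_smul]
    · rw [dif_neg h]
      push_neg at h
      have hble : (i:ℕ) ≤ (j:ℕ) - 1 := by omega
      have hface := face_face act hLD i ⟨(j:ℕ)-1, by have := j.isLt; omega⟩ hble x
      have hc1 : (⟨(j:ℕ)-1, by have := j.isLt; omega⟩ : Fin (k+1)).succ = j :=
        Fin.ext (by simp [Fin.val_succ]; omega)
      have hc2 : (⟨(i:ℕ), by have := i.isLt; omega⟩ : Fin (k+2)) = i.castSucc :=
        Fin.ext rfl
      rw [hc1] at hface
      simp only [hF]
      rw [hc2, ← hface, ← add_smul]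
      obtain ⟨m, hm⟩ : ∃ m, (j:ℕ) = m + 1 := ⟨(j:ℕ)-1, by omega⟩
      rw [hm, Nat.add_sub_cancel]
      have hcoef : ((-1:ℤ)^(m+1) * (-1)^((i:ℕ)) + (-1)^((i:ℕ)) * (-1)^m) = 0 := by
        rw [pow_succ]; ring
      rw [hcoef, zero_smul]
  · -- g_ne
    rintro ⟨j, i⟩ - hne
    dsimp only
    by_cases h : ((j:ℕ) ≤ (i:ℕ))
    · rw [dif_pos h]
      intro hcon
      have := congrArg (fun p : Fin (k+2) × Fin (k+1) => ((p.1 : Fin (k+2)) : ℕ)) hcon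
      dsimp only at this
      omega
    · rw [dif_neg h]
      push_neg at h
      intro hcon
      have := congrArg (fun p : Fin (k+2) × Fin (k+1) => ((p.1 : Fin (k+2)) : ℕ)) hcon
      dsimp only at this
      omega
  · -- involution
    rintro ⟨j, i⟩ -
    dsimp only
    by_cases h : ((j:ℕ) ≤ (i:ℕ))
    · rw [dif_pos h]
      dsimp only
      rw [dif_neg (show ¬((i:ℕ)+1 ≤ (j:ℕ)) from by omega)]
      exact Prod.ext (Fin.ext rfl) (Fin.ext (show (i:ℕ)+1-1 = (i:ℕ) from by omega))
    · rw [dif_neg h]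
      push_neg at h
      dsimp only
      rw [dif_pos (show ((i:ℕ) ≤ (j:ℕ)-1) from by omega)]
      exact Prod.ext (Fin.ext (show (j:ℕ)-1+1 = (j:ℕ) from by omega)) (Fin.ext rfl)

end ChainWork

namespace ChainWork

variable {S : Type*} (act : S → S → S)

theorem chain_main (e : S) (he : ∀ y, act e y = y)
    (hLD : ∀ a b c, act a (act b c) = act (act a b) (act a c)) :
    Function.Surjective (bdry act 0) ∧
    (∀ k, LinearMap.ker (bdry act k) = LinearMap.range (bdry act (k + 1))) := by
  constructor
  · intro y
    refine ⟨hmt e 0 y, ?_⟩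
    have hcomp : (bdry act 0).comp (hmt e 0) = LinearMap.id := by
      rw [bdry, Fin.sum_univ_one, hmt]
      simp only [Fin.val_zero, pow_zero, one_smul]
      rw [← Finsupp.lmapDomain_comp]
      have hfun : (laverFace act (0 : Fin 1)) ∘ (fun z : Fin 0 → S => Fin.cons e z)
          = id := by
        funext z j
        exact j.elim0
      rw [hfun, Finsupp.lmapDomain_id]
    exact DFunLike.congr_fun hcomp y
  · intro k
    apply le_antisymm
    · intro z hz
      rw [LinearMap.mem_ker] at hz
      have hid := DFunLike.congr_fun (homotopy e he k) z
      rw [LinearMap.add_apply, LinearMap.comp_apply, LinearMap.comp_apply,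
        LinearMap.id_apply, hz, map_zero, add_zero] at hid
      exact ⟨hmt e (k+1) z, hid⟩
    · rintro z ⟨w, rfl⟩
      rw [LinearMap.mem_ker]
      exact DFunLike.congr_fun (bdry_bdry act hLD k) w

end ChainWork

/-- the one-term distributive chain complex of the `n`-th Laver table is
acyclic: `∂^▷_1 : C_1 → C_0 ≅ ℤ` is surjective and the kernel of each boundary map
equals the image of the next one; hence all homology groups are trivial. -/
theorem laver_one_term_acyclic (n : ℕ) (op : ℕ → ℕ → ℕ) (h : IsLaverOp (2 ^ n) op)
    (act : LaverSet n → LaverSet n → LaverSet n)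
    (hact : ∀ a b : LaverSet n, (act a b).val = op a.val b.val) :
    Function.Surjective (bdry act 0) ∧
    (∀ k, LinearMap.ker (bdry act k) = LinearMap.range (bdry act (k + 1))) := by
  have hN : 1 ≤ 2 ^ n := Nat.one_le_two_pow
  obtain ⟨hL, hstarT⟩ := LaverWork.tab_pkg n
  have hopeq : ∀ p q, 1 ≤ p → p ≤ 2^n → 1 ≤ q → q ≤ 2^n → op p q = tab (2^n) p q :=
    fun p q hp hpN hq hqN =>
      LaverWork.op_unique h hL (2^n - p) p q rfl hp hpN hq hqN
  have hstar : ∀ p, 1 ≤ p → p ≤ 2^n → op p (2^n) = 2^n := by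
    intro p hp hpN
    rw [hopeq p (2^n) hp hpN hN (le_refl _)]
    exact hstarT p hp hpN
  have hLD_op := LaverWork.op_ld h hN hstar
  have he : ∀ y : LaverSet n, act ⟨2^n, hN, le_refl _⟩ y = y := by
    intro y
    apply Subtype.ext
    rw [hact]
    exact LaverWork.op_top h hN y.val y.2.1 y.2.2
  have hLD : ∀ a b c : LaverSet n, act a (act b c) = act (act a b) (act a c) := by
    intro a b c
    apply Subtype.ext
    rw [hact, hact, hact, hact, hact]
    exact hLD_op (2^n - a.val) a.val rfl a.2.1 a.2.2 (2^n - b.val) b.val rfl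
      b.2.1 b.2.2 c.val c.2.1 c.2.2
  exact ChainWork.chain_main act ⟨2^n, hN, le_refl _⟩ he hLD
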